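/- If P_u = α·P_p + (1−α)·P_n and q_p(c) > 0 for all c ∈ [0,1], then the infimum over c ∈ [0,1] of q_u(c)/q_p(c) equals α + (1−α)·inf_{c ∈ [0,1]} q_n(c)/q_p(c); in particular α ≤ inf_{c ∈ [0,1]} q_u(c)/q_p(c), with equality whenever inf_{c ∈ [0,1]} q_n(c)/q_p(c) = 0. -/

import Mathlib

open MeasureTheory Real

/-- Population tail function `q_P(z) = P({x : f(x) ≥ z})`. -/
noncomputable def qtail {X : Type*} [MeasurableSpace X] (P : Measure X) (f : X → ℝ) (z : ℝ) : ℝ :=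
  (P {x | z ≤ f x}).toReal

/-- If `P_u = α·P_p + (1−α)·P_n` and `q_p > 0` on `[0,1]`, then
`inf_{c∈[0,1]} q_u(c)/q_p(c) = α + (1−α)·inf_{c∈[0,1]} q_n(c)/q_p(c)`;
in particular `α` lower-bounds the infimum, with equality when the negative infimum is `0`. -/
theorem inf_tail_ratio_decomposition {X : Type*} [MeasurableSpace X]
    (f : X → ℝ) (hf : Measurable f) (hf01 : ∀ x, f x ∈ Set.Icc (0:ℝ) 1)
    (Pp Pn Pu : Measure X)
    [IsProbabilityMeasure Pp] [IsProbabilityMeasure Pn] [IsProbabilityMeasure Pu]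
    (α : ℝ) (hα : α ∈ Set.Icc (0:ℝ) 1)
    (hmix : Pu = ENNReal.ofReal α • Pp + ENNReal.ofReal (1 - α) • Pn)
    (hqp : ∀ c ∈ Set.Icc (0:ℝ) 1, 0 < qtail Pp f c) :
    sInf ((fun c => qtail Pu f c / qtail Pp f c) '' Set.Icc (0:ℝ) 1) =
        α + (1 - α) * sInf ((fun c => qtail Pn f c / qtail Pp f c) '' Set.Icc (0:ℝ) 1) ∧
      α ≤ sInf ((fun c => qtail Pu f c / qtail Pp f c) '' Set.Icc (0:ℝ) 1) ∧
      (sInf ((fun c => qtail Pn f c / qtail Pp f c) '' Set.Icc (0:ℝ) 1) = 0 →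
        α = sInf ((fun c => qtail Pu f c / qtail Pp f c) '' Set.Icc (0:ℝ) 1)) := by
  obtain ⟨hα0, hα1⟩ := hα
  have hα1' : (0:ℝ) ≤ 1 - α := by linarith
  -- decomposition of qtail Pu
  have hdec : ∀ c, qtail Pu f c = α * qtail Pp f c + (1 - α) * qtail Pn f c := by
    intro c
    have hs : MeasurableSet {x | c ≤ f x} := measurableSet_le measurable_const hf
    simp only [qtail, hmix]
    rw [Measure.add_apply, Measure.smul_apply, Measure.smul_apply, smul_eq_mul, smul_eq_mul,
      ENNReal.toReal_add, ENNReal.toReal_mul, ENNReal.toReal_mul,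
      ENNReal.toReal_ofReal hα0, ENNReal.toReal_ofReal hα1']
    case ha => exact ENNReal.mul_ne_top ENNReal.ofReal_ne_top (measure_ne_top _ _)
    case hb => exact ENNReal.mul_ne_top ENNReal.ofReal_ne_top (measure_ne_top _ _)
  have hratio : ∀ c ∈ Set.Icc (0:ℝ) 1,
      qtail Pu f c / qtail Pp f c = α + (1 - α) * (qtail Pn f c / qtail Pp f c) := by
    intro c hc
    have hp := (hqp c hc).ne'
    field_simp [hdec c]
    rw [hdec c]; ring
  set g : ℝ → ℝ := fun c => qtail Pn f c / qtail Pp f c with hg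
  have himg :
      (fun c => qtail Pu f c / qtail Pp f c) '' Set.Icc (0:ℝ) 1 =
        (fun y => α + (1 - α) * y) '' (g '' Set.Icc (0:ℝ) 1) := by
    rw [← Set.image_comp]
    exact Set.image_congr fun c hc => hratio c hc
  have hne : (g '' Set.Icc (0:ℝ) 1).Nonempty :=
    ⟨g 0, Set.mem_image_of_mem _ (by norm_num)⟩
  have hbdd : BddBelow (g '' Set.Icc (0:ℝ) 1) := by
    refine ⟨0, ?_⟩
    rintro y ⟨c, hc, rfl⟩
    exact div_nonneg ENNReal.toReal_nonneg (le_of_lt (hqp c hc))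
  have hmono : Monotone (fun y : ℝ => α + (1 - α) * y) := fun a b hab => by
    dsimp; nlinarith
  have hkey : sInf ((fun c => qtail Pu f c / qtail Pp f c) '' Set.Icc (0:ℝ) 1) =
      α + (1 - α) * sInf (g '' Set.Icc (0:ℝ) 1) := by
    rw [himg]
    exact (Monotone.map_csInf_of_continuousAt
      (Continuous.continuousAt (by continuity)) hmono hne hbdd).symm
  have hInf0 : 0 ≤ sInf (g '' Set.Icc (0:ℝ) 1) := by
    apply le_csInf hne
    rintro y ⟨c, hc, rfl⟩
    exact div_nonneg ENNReal.toReal_nonneg (le_of_lt (hqp c hc))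
  refine ⟨hkey, ?_, ?_⟩
  · rw [hkey]; nlinarith
  · intro h0; rw [hkey, h0]; ring
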